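/- Let n ≥ 2 and 0 < α ≤ 1. There exists a constant C_{n,α} > 0, depending only on n and α, such that the following holds. Let 0 < K_− ≤ K ≤ K_+, h > 0, b > 0 with b² ≥ h/K_−, let w : ℝ^{n−1} → ℝ be measurable with K_−|x'|² ≤ w(x') ≤ K_+|x'|² for all |x'| < b, and set D_{b,h} = { x = (x', x_n) ∈ ℝⁿ : |x'| < b, w(x') < x_n < h }. Let F : ℝⁿ → ℝⁿ satisfy |F(x) − F(0)| ≤ A|x|^α for all x in the closure of D_{b,h}, where A ≥ 0. Then for all τ > 0, every unit vector v̂' ∈ ℝ^{n−1}, and ξ = iτ(v̂', 0) − τe_n, one has |∫_{D_{b,h}} (ξ · (F(x) − F(0))) E_ξ(x) dx| ≤ C_{n,α} A τ (h + K_−^{−1})^{α/2} h^{(n+α+1)/2} K_−^{−(n−1)/2}. -/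

import Mathlib

open MeasureTheory

/-- For `n ≥ 2` and `0 < α ≤ 1` there is `C_{n,α} > 0` such that:
with `D_{b,h}` as in Statement 5 and `F : ℝⁿ → ℝⁿ` satisfying the Hölder bound
`|F(x) − F(0)| ≤ A|x|^α` (Euclidean norms) on the closure of `D_{b,h}`, one has for
all `τ > 0`, unit `v̂'` and `ξ = iτ(v̂',0) − τe_n`:
`|∫_{D_{b,h}} (ξ·(F(x) − F(0))) E_ξ(x) dx|
  ≤ C_{n,α} A τ (h + K_−^{−1})^{α/2} h^{(n+α+1)/2} K_−^{−(n−1)/2}`. -/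
theorem cgo_I3_estimate (n : ℕ) (hn : 2 ≤ n) (α : ℝ) (hα0 : 0 < α) (hα1 : α ≤ 1) :
    ∃ C : ℝ, 0 < C ∧
      ∀ (Km K Kp h b A : ℝ), 0 < Km → Km ≤ K → K ≤ Kp → 0 < h → 0 < b →
        h / Km ≤ b ^ 2 → 0 ≤ A →
        ∀ w : EuclideanSpace ℝ (Fin (n - 1)) → ℝ, Measurable w →
          (∀ x' : EuclideanSpace ℝ (Fin (n - 1)), ‖x'‖ < b →
            Km * ‖x'‖ ^ 2 ≤ w x' ∧ w x' ≤ Kp * ‖x'‖ ^ 2) →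
        ∀ F : EuclideanSpace ℝ (Fin (n - 1)) × ℝ → EuclideanSpace ℝ (Fin (n - 1)) × ℝ,
          (∀ x ∈ closure {x : EuclideanSpace ℝ (Fin (n - 1)) × ℝ |
              ‖x.1‖ < b ∧ w x.1 < x.2 ∧ x.2 < h},
            Real.sqrt (‖(F x).1 - (F 0).1‖ ^ 2 + ((F x).2 - (F 0).2) ^ 2)
              ≤ A * Real.sqrt (‖x.1‖ ^ 2 + x.2 ^ 2) ^ α) →
        ∀ τ : ℝ, 0 < τ →
        ∀ v : EuclideanSpace ℝ (Fin (n - 1)), ‖v‖ = 1 →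
          ‖
            (∫ x in {x : EuclideanSpace ℝ (Fin (n - 1)) × ℝ | ‖x.1‖ < b ∧ w x.1 < x.2 ∧ x.2 < h},
              (Complex.I * (τ : ℂ) * ((inner ℝ v ((F x).1 - (F 0).1) : ℝ) : ℂ)
                  - (τ : ℂ) * (((F x).2 - (F 0).2 : ℝ) : ℂ))
                * Complex.exp (Complex.I * (τ : ℂ) * ((inner ℝ v x.1 : ℝ) : ℂ) - (τ : ℂ) * (x.2 : ℂ)))‖
            ≤ C * A * τ * (h + Km⁻¹) ^ (α / 2) * h ^ (((n : ℝ) + α + 1) / 2)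
                * Km ^ (-(((n : ℝ) - 1) / 2)) := by
  haveI : Nonempty (Fin (n - 1)) := ⟨⟨0, by omega⟩⟩
  haveI : Nontrivial (EuclideanSpace ℝ (Fin (n - 1))) := inferInstance
  set V : ℝ := (volume (Metric.ball (0 : EuclideanSpace ℝ (Fin (n - 1))) 1)).toReal with hV
  have hV0 : 0 ≤ V := ENNReal.toReal_nonneg
  refine ⟨V + 1, by positivity, ?_⟩
  intro Km K Kp h b A hKm _ _ hh hb _ hA w hwm hw F hF τ hτ v hv
  set D : Set (EuclideanSpace ℝ (Fin (n - 1)) × ℝ) :=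
    {x | ‖x.1‖ < b ∧ w x.1 < x.2 ∧ x.2 < h} with hD
  set r : ℝ := Real.sqrt (h / Km) with hr
  -- basic facts about points of D
  have hmem : ∀ x ∈ D, ‖x.1‖ ^ 2 < h / Km ∧ 0 < x.2 ∧ x.2 < h := by
    rintro ⟨x1, x2⟩ ⟨h1, h2, h3⟩
    obtain ⟨hw1, -⟩ := hw x1 h1
    have hx2 : 0 < x2 := lt_of_le_of_lt (by positivity) (lt_of_le_of_lt hw1 h2)
    have : Km * ‖x1‖ ^ 2 < h := lt_of_le_of_lt hw1 (h2.trans h3)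
    refine ⟨?_, hx2, h3⟩
    rw [lt_div_iff₀ hKm, mul_comm]
    exact this
  -- D is contained in a cylinder
  have hsub : D ⊆ Metric.ball (0 : EuclideanSpace ℝ (Fin (n - 1))) r ×ˢ Set.Ioo 0 h := by
    intro x hx
    obtain ⟨h1, h2, h3⟩ := hmem x hx
    refine ⟨?_, h2, h3⟩
    simp only [Metric.mem_ball, dist_zero_right]
    exact (Real.lt_sqrt (norm_nonneg _)).2 h1
  -- measurability of D
  have hDm : MeasurableSet D := by
    have m1 : MeasurableSet {x : EuclideanSpace ℝ (Fin (n - 1)) × ℝ | ‖x.1‖ < b} :=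
      measurableSet_lt measurable_fst.norm measurable_const
    have m2 : MeasurableSet {x : EuclideanSpace ℝ (Fin (n - 1)) × ℝ | w x.1 < x.2} :=
      measurableSet_lt (hwm.comp measurable_fst) measurable_snd
    have m3 : MeasurableSet {x : EuclideanSpace ℝ (Fin (n - 1)) × ℝ | x.2 < h} :=
      measurableSet_lt measurable_snd measurable_const
    exact m1.inter (m2.inter m3)
  -- volume of the cylinder
  have hball : volume (Metric.ball (0 : EuclideanSpace ℝ (Fin (n - 1))) r)
      = ENNReal.ofReal (r ^ (n - 1)) *
        volume (Metric.ball (0 : EuclideanSpace ℝ (Fin (n - 1))) 1) := by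
    have := Measure.addHaar_ball (volume : Measure (EuclideanSpace ℝ (Fin (n - 1)))) 0
      (Real.sqrt_nonneg (h / Km))
    rwa [finrank_euclideanSpace_fin] at this
  have hcyl : volume (Metric.ball (0 : EuclideanSpace ℝ (Fin (n - 1))) r ×ˢ Set.Ioo 0 h)
      = ENNReal.ofReal (r ^ (n - 1)) *
        volume (Metric.ball (0 : EuclideanSpace ℝ (Fin (n - 1))) 1) * ENNReal.ofReal h := by
    rw [show (volume : Measure (EuclideanSpace ℝ (Fin (n - 1)) × ℝ)) = Measure.prod volume volume
        from Measure.volume_eq_prod _ _, Measure.prod_prod, Real.volume_Ioo, sub_zero, hball]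
  have hfin : volume D < ⊤ := by
    refine lt_of_le_of_lt (measure_mono hsub) ?_
    rw [hcyl]
    exact ENNReal.mul_lt_top (ENNReal.mul_lt_top ENNReal.ofReal_lt_top measure_ball_lt_top)
      ENNReal.ofReal_lt_top
  -- pointwise bound
  set M : ℝ := τ * (A * Real.sqrt (h / Km + h ^ 2) ^ α) with hM
  have hbound : ∀ x ∈ D,
      ‖(Complex.I * (τ : ℂ) * ((inner ℝ v ((F x).1 - (F 0).1) : ℝ) : ℂ)
            - (τ : ℂ) * (((F x).2 - (F 0).2 : ℝ) : ℂ))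
          * Complex.exp (Complex.I * (τ : ℂ) * ((inner ℝ v x.1 : ℝ) : ℂ) - (τ : ℂ) * (x.2 : ℂ))‖
        ≤ M := by
    intro x hx
    obtain ⟨h1, h2, h3⟩ := hmem x hx
    set a : ℝ := (inner ℝ v ((F x).1 - (F 0).1) : ℝ) with ha
    set bb : ℝ := (F x).2 - (F 0).2 with hbb
    have habs1 : ‖Complex.I * (τ : ℂ) * (a : ℂ) - (τ : ℂ) * (bb : ℂ)‖
        = Real.sqrt (τ ^ 2 * (a ^ 2 + bb ^ 2)) := by
      rw [Complex.norm_def, Complex.normSq_apply]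
      congr 1
      simp [Complex.mul_re, Complex.mul_im]
      ring
    have habs2 : ‖Complex.exp
        (Complex.I * (τ : ℂ) * ((inner ℝ v x.1 : ℝ) : ℂ) - (τ : ℂ) * (x.2 : ℂ))‖
        = Real.exp (-(τ * x.2)) := by
      rw [Complex.norm_exp]
      congr 1
      simp [Complex.mul_re]
    rw [norm_mul, habs1, habs2]
    have e1 : Real.sqrt (τ ^ 2 * (a ^ 2 + bb ^ 2)) = τ * Real.sqrt (a ^ 2 + bb ^ 2) := by
      rw [Real.sqrt_mul (sq_nonneg τ), Real.sqrt_sq hτ.le]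
    have e2 : Real.exp (-(τ * x.2)) ≤ 1 := by
      rw [Real.exp_le_one_iff]
      nlinarith
    have e3 : Real.sqrt (a ^ 2 + bb ^ 2) ≤ A * Real.sqrt (‖x.1‖ ^ 2 + x.2 ^ 2) ^ α := by
      refine le_trans ?_ (hF x (subset_closure hx))
      apply Real.sqrt_le_sqrt
      rw [← hbb]
      have : |a| ≤ ‖(F x).1 - (F 0).1‖ := by
        calc |a| ≤ ‖v‖ * ‖(F x).1 - (F 0).1‖ := abs_real_inner_le_norm v _
        _ = ‖(F x).1 - (F 0).1‖ := by rw [hv, one_mul]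
      have ha2 : a ^ 2 ≤ ‖(F x).1 - (F 0).1‖ ^ 2 := by
        rw [← sq_abs a]
        exact pow_le_pow_left₀ (abs_nonneg a) this 2
      linarith
    have e4 : Real.sqrt (‖x.1‖ ^ 2 + x.2 ^ 2) ^ α ≤ Real.sqrt (h / Km + h ^ 2) ^ α := by
      apply Real.rpow_le_rpow (Real.sqrt_nonneg _) _ hα0.le
      apply Real.sqrt_le_sqrt
      have hx2 : x.2 ^ 2 ≤ h ^ 2 := pow_le_pow_left₀ h2.le h3.le 2
      linarith
    calc Real.sqrt (τ ^ 2 * (a ^ 2 + bb ^ 2)) * Real.exp (-(τ * x.2))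
        ≤ Real.sqrt (τ ^ 2 * (a ^ 2 + bb ^ 2)) * 1 := by
          apply mul_le_mul_of_nonneg_left e2 (Real.sqrt_nonneg _)
      _ = τ * Real.sqrt (a ^ 2 + bb ^ 2) := by rw [mul_one, e1]
      _ ≤ τ * (A * Real.sqrt (‖x.1‖ ^ 2 + x.2 ^ 2) ^ α) :=
          mul_le_mul_of_nonneg_left e3 hτ.le
      _ ≤ M := by
          rw [hM]
          apply mul_le_mul_of_nonneg_left _ hτ.le
          exact mul_le_mul_of_nonneg_left e4 hA
  -- integral bound
  have key : ‖(∫ x in D,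
      (Complex.I * (τ : ℂ) * ((inner ℝ v ((F x).1 - (F 0).1) : ℝ) : ℂ)
          - (τ : ℂ) * (((F x).2 - (F 0).2 : ℝ) : ℂ))
        * Complex.exp (Complex.I * (τ : ℂ) * ((inner ℝ v x.1 : ℝ) : ℂ) - (τ : ℂ) * (x.2 : ℂ)))‖
      ≤ M * (volume D).toReal := by
    exact norm_setIntegral_le_of_norm_le_const hfin hbound
  refine le_trans key ?_
  -- measure estimate
  have hvol : (volume D).toReal ≤ r ^ (n - 1) * V * h := by
    have h1 : volume D ≤ ENNReal.ofReal (r ^ (n - 1)) *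
        volume (Metric.ball (0 : EuclideanSpace ℝ (Fin (n - 1))) 1) * ENNReal.ofReal h := by
      rw [← hcyl]; exact measure_mono hsub
    calc (volume D).toReal
        ≤ (ENNReal.ofReal (r ^ (n - 1)) *
            volume (Metric.ball (0 : EuclideanSpace ℝ (Fin (n - 1))) 1) *
            ENNReal.ofReal h).toReal := by
          apply ENNReal.toReal_mono _ h1
          exact (ENNReal.mul_lt_top
            (ENNReal.mul_lt_top ENNReal.ofReal_lt_top measure_ball_lt_top)
            ENNReal.ofReal_lt_top).ne
      _ = r ^ (n - 1) * V * h := by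
          rw [ENNReal.toReal_mul, ENNReal.toReal_mul, ENNReal.toReal_ofReal (by positivity),
            ENNReal.toReal_ofReal hh.le, hV]
  have hM0 : 0 ≤ M := by
    rw [hM]; positivity
  refine le_trans (mul_le_mul_of_nonneg_left hvol hM0) ?_
  -- final algebra with rpow identities
  have hcast : ((n - 1 : ℕ) : ℝ) = (n : ℝ) - 1 := by
    have : (1 : ℕ) ≤ n := by omega
    push_cast [Nat.cast_sub this]
    ring
  have hhk : 0 ≤ h * (h + Km⁻¹) := by positivity
  have eA : Real.sqrt (h / Km + h ^ 2) ^ α = h ^ (α / 2) * (h + Km⁻¹) ^ (α / 2) := by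
    have : h / Km + h ^ 2 = h * (h + Km⁻¹) := by field_simp; ring
    rw [this, Real.sqrt_eq_rpow, ← Real.rpow_mul hhk,
      show (1 / 2 : ℝ) * α = α / 2 by ring, Real.mul_rpow hh.le (by positivity)]
  have eB : r ^ (n - 1) = h ^ (((n : ℝ) - 1) / 2) * Km ^ (-(((n : ℝ) - 1) / 2)) := by
    rw [hr, Real.sqrt_eq_rpow, ← Real.rpow_natCast ((h / Km) ^ _) (n - 1),
      ← Real.rpow_mul (by positivity), hcast,
      show (1 / 2 : ℝ) * ((n : ℝ) - 1) = ((n : ℝ) - 1) / 2 by ring,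
      Real.div_rpow hh.le hKm.le, Real.rpow_neg hKm.le, div_eq_mul_inv]
  have eC : h ^ (((n : ℝ) + α + 1) / 2) = h ^ (α / 2) * h ^ (((n : ℝ) - 1) / 2) * h := by
    rw [show ((n : ℝ) + α + 1) / 2 = α / 2 + ((n : ℝ) - 1) / 2 + 1 by ring,
      Real.rpow_add hh, Real.rpow_add hh, Real.rpow_one]
  have heq : M * (r ^ (n - 1) * V * h)
      = V * (A * τ * (h + Km⁻¹) ^ (α / 2) * h ^ (((n : ℝ) + α + 1) / 2)
          * Km ^ (-(((n : ℝ) - 1) / 2))) := by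
    rw [hM, eA, eB, eC]
    ring
  rw [heq]
  have hX : 0 ≤ A * τ * (h + Km⁻¹) ^ (α / 2) * h ^ (((n : ℝ) + α + 1) / 2)
      * Km ^ (-(((n : ℝ) - 1) / 2)) := by positivity
  nlinarith [hX, hV0]
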